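/- Let k ≥ 1 be an integer and for each l = 0, 1, …, k let α^l : ℕ × ℕ → ℝ be a finitely supported family of nonnegative real numbers. Then Σ_{i₀, i₁, …, i_k ∈ ℕ} α⁰_{i₀ i₁}·α¹_{i₁ i₂}·…·α^{k−1}_{i_{k−1} i_k}·α^k_{i_k i₀} ≤ Π_{l=0}^{k} (Σ_{i,j ∈ ℕ} (α^l_{ij})²)^{1/2}. -/

import Mathlib

open Finset

/-- Path sum: sum over interior vertices in `S` of products of matrix entries along a path. -/
def pathF (S : Finset ℕ) : (n : ℕ) → (Fin (n + 1) → ℕ → ℕ → ℝ) → ℕ → ℕ → ℝ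
  | 0, β, i, j => β 0 i j
  | (n + 1), β, i, j => ∑ m ∈ S, β 0 i m * pathF S n (Fin.tail β) m j

lemma pathF_nonneg (S : Finset ℕ) : ∀ (n : ℕ) (β : Fin (n + 1) → ℕ → ℕ → ℝ),
    (∀ l i j, 0 ≤ β l i j) → ∀ i j, 0 ≤ pathF S n β i j
  | 0, β, hβ, i, j => hβ 0 i j
  | (n + 1), β, hβ, i, j => Finset.sum_nonneg fun m _ =>
      mul_nonneg (hβ 0 i m) (pathF_nonneg S n (Fin.tail β) (fun l i j => hβ l.succ i j) m j)

/-- Peeling the first coordinate off a sum over tuples. -/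
lemma sum_piFinset_cons {n : ℕ} (S : Finset ℕ) (f : (Fin (n + 1) → ℕ) → ℝ) :
    ∑ x ∈ Fintype.piFinset (fun _ : Fin (n + 1) => S), f x
      = ∑ m ∈ S, ∑ x ∈ Fintype.piFinset (fun _ : Fin n => S), f (Fin.cons m x) := by
  have h2 : (∑ m ∈ S, ∑ x ∈ Fintype.piFinset (fun _ : Fin n => S), f (Fin.cons m x))
      = ∑ p ∈ S ×ˢ Fintype.piFinset (fun _ : Fin n => S), f (Fin.cons p.1 p.2) :=
    (Finset.sum_product S (Fintype.piFinset (fun _ : Fin n => S)) (fun p => f (Fin.cons p.1 p.2))).symm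
  rw [h2]
  refine Finset.sum_nbij' (fun x => (x 0, Fin.tail x)) (fun p => Fin.cons p.1 p.2) ?_ ?_ ?_ ?_ ?_
  · intro x hx
    simp only [Fintype.mem_piFinset] at hx
    simp only [Finset.mem_product, Fintype.mem_piFinset]
    exact ⟨hx 0, fun a => hx a.succ⟩
  · intro p hp
    simp only [Finset.mem_product, Fintype.mem_piFinset] at hp
    simp only [Fintype.mem_piFinset]
    intro a
    refine Fin.cases ?_ ?_ a
    · simpa using hp.1
    · intro m; simpa using hp.2 m
  · intro x hx; exact Fin.cons_self_tail x
  · intro p hp; simp [Fin.tail_cons]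
  · intro x hx; rw [Fin.cons_self_tail]

/-- Expansion of the path sum as a sum over interior tuples. -/
lemma pathF_expand (S : Finset ℕ) : ∀ (n : ℕ) (β : Fin (n + 1) → ℕ → ℕ → ℝ) (i j : ℕ),
    (∑ x ∈ Fintype.piFinset (fun _ : Fin n => S),
      ∏ l : Fin (n + 1), β l ((Fin.cons i (Fin.snoc x j) : Fin (n + 2) → ℕ) l.castSucc)
        ((Fin.cons i (Fin.snoc x j) : Fin (n + 2) → ℕ) l.succ))
      = pathF S n β i j := by
  intro n
  induction n with
  | zero =>
    intro β i j
    simp [pathF, Fin.prod_univ_succ, Fin.snoc]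
  | succ n ih =>
    intro β i j
    rw [sum_piFinset_cons]
    show _ = pathF S (n+1) β i j
    rw [pathF]
    refine Finset.sum_congr rfl fun m _ => ?_
    rw [← ih (Fin.tail β) m j, Finset.mul_sum]
    refine Finset.sum_congr rfl fun x _ => ?_
    have hyz : ∀ t : Fin (n + 2),
        (Fin.cons i (Fin.snoc (Fin.cons m x) j) : Fin (n + 3) → ℕ) t.succ
          = (Fin.cons m (Fin.snoc x j) : Fin (n + 2) → ℕ) t := by
      intro t
      rw [Fin.cons_succ, ← Fin.cons_snoc_eq_snoc_cons]
    rw [Fin.prod_univ_succ]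
    congr 1
    · refine Finset.prod_congr rfl fun l _ => ?_
      rw [← Fin.succ_castSucc, hyz l.castSucc, hyz l.succ]
      rfl

/-- Hilbert–Schmidt bound for the path sum. -/
lemma pathF_sq_le (S : Finset ℕ) : ∀ (n : ℕ) (β : Fin (n + 1) → ℕ → ℕ → ℝ),
    (∀ l i j, 0 ≤ β l i j) →
    (∑ p ∈ S ×ˢ S, (pathF S n β p.1 p.2) ^ 2)
      ≤ ∏ l : Fin (n + 1), ∑ p ∈ S ×ˢ S, (β l p.1 p.2) ^ 2 := by
  intro n
  induction n with
  | zero =>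
    intro β hβ
    simp [pathF, Fin.prod_univ_succ]
  | succ n ih =>
    intro β hβ
    have htail : ∀ l i j, 0 ≤ Fin.tail β l i j := fun l i j => hβ l.succ i j
    calc (∑ p ∈ S ×ˢ S, (pathF S (n+1) β p.1 p.2) ^ 2)
        ≤ ∑ p ∈ S ×ˢ S, (∑ m ∈ S, (β 0 p.1 m) ^ 2) *
            (∑ m ∈ S, (pathF S n (Fin.tail β) m p.2) ^ 2) := by
          refine Finset.sum_le_sum fun p _ => ?_
          rw [pathF]
          exact Finset.sum_mul_sq_le_sq_mul_sq S _ _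
      _ = (∑ i ∈ S, ∑ m ∈ S, (β 0 i m) ^ 2) *
            (∑ j ∈ S, ∑ m ∈ S, (pathF S n (Fin.tail β) m j) ^ 2) := by
          rw [Finset.sum_product]
          dsimp only
          exact (Finset.sum_mul_sum S S _ _).symm
      _ = (∑ p ∈ S ×ˢ S, (β 0 p.1 p.2) ^ 2) *
            (∑ p ∈ S ×ˢ S, (pathF S n (Fin.tail β) p.1 p.2) ^ 2) := by
          congr 1
          · exact (Finset.sum_product S S fun p => (β 0 p.1 p.2) ^ 2).symm
          · rw [Finset.sum_comm]
            exact (Finset.sum_product S S fun p => (pathF S n (Fin.tail β) p.1 p.2) ^ 2).symm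
      _ ≤ (∑ p ∈ S ×ˢ S, (β 0 p.1 p.2) ^ 2) *
            ∏ l : Fin (n + 1), ∑ p ∈ S ×ˢ S, (Fin.tail β l p.1 p.2) ^ 2 := by
          refine mul_le_mul_of_nonneg_left (ih (Fin.tail β) htail) ?_
          exact Finset.sum_nonneg fun p _ => sq_nonneg _
      _ = ∏ l : Fin (n + 2), ∑ p ∈ S ×ˢ S, (β l p.1 p.2) ^ 2 := by
          rw [Fin.prod_univ_succ (f := fun l : Fin (n + 2) => ∑ p ∈ S ×ˢ S, (β l p.1 p.2) ^ 2)]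
          rfl

lemma sqrt_finset_prod {ι : Type*} (s : Finset ι) (f : ι → ℝ) (hf : ∀ i ∈ s, 0 ≤ f i) :
    Real.sqrt (∏ i ∈ s, f i) = ∏ i ∈ s, Real.sqrt (f i) := by
  induction s using Finset.cons_induction with
  | empty => simp
  | cons a s ha ih =>
    rw [Finset.prod_cons, Finset.prod_cons, Real.sqrt_mul (hf a (Finset.mem_cons_self a s)),
      ih fun i hi => hf i (Finset.mem_cons_of_mem hi)]



/-- **Trace–Hilbert–Schmidt inequality for cyclic products of nonnegative matrices.**
For finitely supported families of nonnegative reals `α^l : ℕ × ℕ → ℝ`, `l = 0, …, k`,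
`Σ_{i₀,…,i_k} α⁰_{i₀i₁} α¹_{i₁i₂} ⋯ α^k_{i_k i₀} ≤ Π_l (Σ_{i,j} (α^l_{ij})²)^{1/2}`. -/
theorem cyclic_product_hilbert_schmidt (k : ℕ) (hk : 1 ≤ k)
    (α : Fin (k + 1) → ℕ → ℕ → ℝ)
    (hnonneg : ∀ (l : Fin (k + 1)) (i j : ℕ), 0 ≤ α l i j)
    (hfin : ∀ l : Fin (k + 1), (Function.support fun p : ℕ × ℕ => α l p.1 p.2).Finite) :
    (∑' i : Fin (k + 1) → ℕ, ∏ l : Fin (k + 1), α l (i l) (i (l + 1)))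
      ≤ ∏ l : Fin (k + 1), Real.sqrt (∑' p : ℕ × ℕ, (α l p.1 p.2) ^ 2) := by
  obtain ⟨k', rfl⟩ : ∃ k', k = k' + 1 := ⟨k - 1, by omega⟩
  classical
  set T : Finset (ℕ × ℕ) := Finset.univ.biUnion fun l => (hfin l).toFinset with hT
  set S : Finset ℕ := T.image Prod.fst ∪ T.image Prod.snd with hSdef
  have hS : ∀ (l : Fin (k' + 2)) (i j : ℕ), α l i j ≠ 0 → i ∈ S ∧ j ∈ S := by
    intro l i j h
    have hmem : (i, j) ∈ T := by
      rw [hT]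
      refine Finset.mem_biUnion.2 ⟨l, Finset.mem_univ l, ?_⟩
      simpa [Function.support] using h
    constructor
    · exact Finset.mem_union_left _ (Finset.mem_image.2 ⟨(i, j), hmem, rfl⟩)
    · exact Finset.mem_union_right _ (Finset.mem_image.2 ⟨(i, j), hmem, rfl⟩)
  -- the tsum over tuples is a finite sum
  have h1 : (∑' i : Fin (k' + 2) → ℕ, ∏ l : Fin (k' + 2), α l (i l) (i (l + 1)))
      = ∑ x ∈ Fintype.piFinset (fun _ : Fin (k' + 2) => S),
          ∏ l : Fin (k' + 2), α l (x l) (x (l + 1)) := by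
    refine tsum_eq_sum fun x hx => ?_
    simp only [Fintype.mem_piFinset, not_forall] at hx
    obtain ⟨l, hl⟩ := hx
    refine Finset.prod_eq_zero (Finset.mem_univ l) ?_
    by_contra h
    exact hl (hS l _ _ h).1
  -- each tsum of squares is a finite sum
  have h2 : ∀ l : Fin (k' + 2), (∑' p : ℕ × ℕ, (α l p.1 p.2) ^ 2)
      = ∑ p ∈ S ×ˢ S, (α l p.1 p.2) ^ 2 := by
    intro l
    refine tsum_eq_sum fun p hp => ?_
    rw [Finset.mem_product] at hp
    push_neg at hp
    by_contra h
    have h' : α l p.1 p.2 ≠ 0 := fun h0 => h (by rw [h0]; ring)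
    obtain ⟨h1', h2'⟩ := hS l _ _ h'
    rcases Classical.em (p.1 ∈ S) with hc | hc
    · exact hp hc h2'
    · exact hc h1'
  rw [h1]
  have hsum_nonneg : ∀ l : Fin (k' + 2), (0:ℝ) ≤ ∑ p ∈ S ×ˢ S, (α l p.1 p.2) ^ 2 :=
    fun l => Finset.sum_nonneg fun p _ => sq_nonneg _
  -- rewrite the finite tuple sum as a diagonal path sum
  have h3 : (∑ x ∈ Fintype.piFinset (fun _ : Fin (k' + 2) => S),
        ∏ l : Fin (k' + 2), α l (x l) (x (l + 1)))
      = ∑ i ∈ S, pathF S (k' + 1) α i i := by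
    rw [sum_piFinset_cons]
    refine Finset.sum_congr rfl fun i _ => ?_
    rw [← pathF_expand S (k' + 1) α i i]
    refine Finset.sum_congr rfl fun x _ => ?_
    refine Finset.prod_congr rfl fun l _ => ?_
    have e1 : (Fin.cons i (Fin.snoc x i) : Fin (k' + 3) → ℕ) l.castSucc
        = (Fin.cons i x : Fin (k' + 2) → ℕ) l := by
      rw [Fin.cons_snoc_eq_snoc_cons, Fin.snoc_castSucc]
    have e2 : (Fin.cons i (Fin.snoc x i) : Fin (k' + 3) → ℕ) l.succ
        = (Fin.cons i x : Fin (k' + 2) → ℕ) (l + 1) := by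
      refine Fin.lastCases ?_ ?_ l
      · rw [Fin.succ_last, Fin.cons_snoc_eq_snoc_cons, Fin.snoc_last, Fin.last_add_one,
          Fin.cons_zero]
      · intro m
        rw [Fin.succ_castSucc, Fin.cons_snoc_eq_snoc_cons, Fin.snoc_castSucc,
          Fin.coeSucc_eq_succ]
    rw [e1, e2]
  rw [h3]
  -- peel off the first factor and apply Cauchy–Schwarz
  have h4 : (∑ i ∈ S, pathF S (k' + 1) α i i)
      = ∑ p ∈ S ×ˢ S, α 0 p.1 p.2 * pathF S k' (Fin.tail α) p.2 p.1 := by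
    rw [Finset.sum_product]
    refine Finset.sum_congr rfl fun i _ => ?_
    rfl
  rw [h4]
  have hCS := Real.sum_mul_le_sqrt_mul_sqrt (S ×ˢ S)
    (fun p => α 0 p.1 p.2) (fun p => pathF S k' (Fin.tail α) p.2 p.1)
  refine le_trans hCS ?_
  have htail : ∀ (l : Fin (k' + 1)) (i j : ℕ), 0 ≤ Fin.tail α l i j :=
    fun l i j => hnonneg l.succ i j
  have hswap : (∑ p ∈ S ×ˢ S, (pathF S k' (Fin.tail α) p.2 p.1) ^ 2)
      = ∑ p ∈ S ×ˢ S, (pathF S k' (Fin.tail α) p.1 p.2) ^ 2 := by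
    rw [Finset.sum_product, Finset.sum_comm]
    exact (Finset.sum_product S S fun p => (pathF S k' (Fin.tail α) p.1 p.2) ^ 2).symm
  have h5 : Real.sqrt (∑ p ∈ S ×ˢ S, (pathF S k' (Fin.tail α) p.2 p.1) ^ 2)
      ≤ Real.sqrt (∏ l : Fin (k' + 1), ∑ p ∈ S ×ˢ S, (Fin.tail α l p.1 p.2) ^ 2) := by
    refine Real.sqrt_le_sqrt ?_
    rw [hswap]
    exact pathF_sq_le S k' (Fin.tail α) htail
  calc Real.sqrt (∑ p ∈ S ×ˢ S, (α 0 p.1 p.2) ^ 2)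
        * Real.sqrt (∑ p ∈ S ×ˢ S, (pathF S k' (Fin.tail α) p.2 p.1) ^ 2)
      ≤ Real.sqrt (∑ p ∈ S ×ˢ S, (α 0 p.1 p.2) ^ 2)
        * Real.sqrt (∏ l : Fin (k' + 1), ∑ p ∈ S ×ˢ S, (Fin.tail α l p.1 p.2) ^ 2) :=
        mul_le_mul_of_nonneg_left h5 (Real.sqrt_nonneg _)
    _ = ∏ l : Fin (k' + 2), Real.sqrt (∑ p ∈ S ×ˢ S, (α l p.1 p.2) ^ 2) := by
        rw [sqrt_finset_prod _ _ (fun l _ => Finset.sum_nonneg fun p _ => sq_nonneg _),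
          Fin.prod_univ_succ (f := fun l : Fin (k' + 2) =>
            Real.sqrt (∑ p ∈ S ×ˢ S, (α l p.1 p.2) ^ 2))]
        rfl
    _ = ∏ l : Fin (k' + 2), Real.sqrt (∑' p : ℕ × ℕ, (α l p.1 p.2) ^ 2) := by
        refine Finset.prod_congr rfl fun l _ => ?_
        rw [h2 l]
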